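/- arXiv:2506.08345 — 2 statements merged into one kernel-verified Lean document; each statement's English description precedes it below -/
import Mathlib

section
/- For m > 2 and even n = 2ℓ, for each i with 1 ≤ i ≤ ℓ, the vector with entries: 0 in the first m(ℓ−i) coordinates, −2i+1 in the next m coordinates, 1 in the next m(2i−1) coordinates, and 0 in the last m(ℓ−i) coordinates, is an eigenvector of M^±(m,n) with eigenvalue 2(ℓ−i). -/
/-- The mn×mn diagonal matrix D(m,n) with diagonal entries 2(j-1), each repeated m times
(rows/columns indexed by pairs (j,k) with j ∈ Fin n the symbol and k ∈ Fin m the color). -/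
def Dmat (m n : ℕ) : Matrix (Fin n × Fin m) (Fin n × Fin m) ℂ :=
  Matrix.of fun a b => if a = b then (2 * (a.1.val : ℂ)) else 0

/-- The block matrix C^±(m,n): the (a,b) block (1-indexed blocks a,b with a+b ≤ n+1,
i.e. 0-indexed a.1+b.1+1 ≤ n) is the m×m circulant with first row (0,1,0,…,0,1),
and all other blocks are zero. -/
def CpmBlock (m n : ℕ) : Matrix (Fin n × Fin m) (Fin n × Fin m) ℂ :=
  Matrix.of fun a b =>
    if a.1.val + b.1.val + 1 ≤ n then
      (if (b.2.val + m - a.2.val) % m = 1 % m then (1 : ℂ) else 0) +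
      (if (a.2.val + m - b.2.val) % m = 1 % m then (1 : ℂ) else 0)
    else 0

lemma mod2m (m x : ℕ) (hm : 0 < m) (hx : x < 2*m) : x % m = if x < m then x else x - m := by
  split_ifs with h
  · exact Nat.mod_eq_of_lt h
  · rw [Nat.mod_eq_sub_mod (by omega)]; exact Nat.mod_eq_of_lt (by omega)

lemma char1 (m : ℕ) (hm : 2 < m) (k k' : Fin m) :
    ((k'.val + m - k.val) % m = 1 % m) ↔ k' = (⟨(k.val+1)%m, Nat.mod_lt _ (by omega)⟩ : Fin m) := by
  rw [Fin.ext_iff]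
  show _ ↔ k'.val = (k.val+1) % m
  have h1 := k.isLt; have h2 := k'.isLt
  rw [mod2m m (k'.val+m-k.val) (by omega) (by omega),
      mod2m m (k.val+1) (by omega) (by omega),
      Nat.mod_eq_of_lt (show 1 < m by omega)]
  split_ifs <;> omega

lemma char2 (m : ℕ) (hm : 2 < m) (k k' : Fin m) :
    ((k.val + m - k'.val) % m = 1 % m) ↔ k' = (⟨(k.val+m-1)%m, Nat.mod_lt _ (by omega)⟩ : Fin m) := by
  rw [Fin.ext_iff]
  show _ ↔ k'.val = (k.val+m-1) % m
  have h1 := k.isLt; have h2 := k'.isLt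
  rw [mod2m m (k.val+m-k'.val) (by omega) (by omega),
      mod2m m (k.val+m-1) (by omega) (by omega),
      Nat.mod_eq_of_lt (show 1 < m by omega)]
  split_ifs <;> omega

lemma sum1 (m : ℕ) (hm : 2 < m) (k : Fin m) :
    ∑ k' : Fin m, (if (k'.val + m - k.val) % m = 1 % m then (1:ℂ) else 0) = 1 := by
  simp only [char1 m hm k]
  rw [Finset.sum_ite_eq']; simp

lemma sum2 (m : ℕ) (hm : 2 < m) (k : Fin m) :
    ∑ k' : Fin m, (if (k.val + m - k'.val) % m = 1 % m then (1:ℂ) else 0) = 1 := by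
  simp only [char2 m hm k]
  rw [Finset.sum_ite_eq']; simp

lemma sum_ite_lt (f : ℕ → ℂ) (K n : ℕ) (h : K ≤ n) :
    ∑ b ∈ Finset.range n, (if b < K then f b else 0) = ∑ b ∈ Finset.range K, f b := by
  rw [← Finset.sum_subset (Finset.range_subset_range.2 h)
      (by intro x _ hx2; simp only [Finset.mem_range] at hx2; rw [if_neg (by omega)])]
  exact Finset.sum_congr rfl fun x hx => if_pos (Finset.mem_range.1 hx)

lemma Tform (l i : ℕ) (hi1 : 1 ≤ i) (hi2 : i ≤ l) (N : ℕ) :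
    ∑ b ∈ Finset.range N, (if b < l - i then (0:ℂ) else if b = l - i then 1 - 2*i
        else if b < l+i then 1 else 0)
    = if N ≤ l - i then 0 else if N ≤ l + i then (N:ℂ) - l - i else 0 := by
  induction N with
  | zero => simp
  | succ N ih =>
    rw [Finset.sum_range_succ, ih]
    split_ifs <;> push_cast <;> try ring
    all_goals try (exfalso; omega)
    · -- N = l - i case
      rw [show N = l - i from by omega, Nat.cast_sub hi2]; ring
    · -- N = l + i case? check later
      rw [show N = l + i from by omega]; push_cast; ring

/-- For m > 2 and even n = 2ℓ, 1 ≤ i ≤ ℓ: the vector with entries 0 (first m(ℓ-i) coords),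
-2i+1 (next m coords), 1 (next m(2i-1) coords), 0 (last m(ℓ-i) coords) is an eigenvector
of M^±(m,n) with eigenvalue 2(ℓ-i). -/
theorem stmt_12 (m l i : ℕ) (hm : 2 < m) (hi1 : 1 ≤ i) (hi2 : i ≤ l) :
    (CpmBlock m (2 * l) + Dmat m (2 * l)).mulVec
        (fun p => if p.1.val < l - i then (0 : ℂ) else if p.1.val = l - i then 1 - 2 * i
          else if p.1.val < l + i then 1 else 0) =
      (2 * ((l : ℂ) - i)) • (fun p : Fin (2 * l) × Fin m =>
        if p.1.val < l - i then (0 : ℂ) else if p.1.val = l - i then 1 - 2 * i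
          else if p.1.val < l + i then 1 else 0) ∧
    (fun p : Fin (2 * l) × Fin m =>
        if p.1.val < l - i then (0 : ℂ) else if p.1.val = l - i then 1 - 2 * i
          else if p.1.val < l + i then 1 else 0) ≠ 0 := by
  set w : ℕ → ℂ := fun b => if b < l - i then (0:ℂ) else if b = l - i then 1 - 2*i
      else if b < l+i then 1 else 0 with hw
  have hv : (fun p : Fin (2 * l) × Fin m =>
      if p.1.val < l - i then (0 : ℂ) else if p.1.val = l - i then 1 - 2 * i
        else if p.1.val < l + i then 1 else 0) = fun p => w p.1.val := rfl
  rw [hv]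
  constructor
  · funext p
    obtain ⟨a, k⟩ := p
    have ha := a.isLt
    rw [Matrix.add_mulVec, Pi.add_apply, Pi.smul_apply, smul_eq_mul]
    -- D part
    have hD : (Dmat m (2*l)).mulVec (fun p => w p.1.val) (a, k) = 2 * a.val * w a.val := by
      rw [Matrix.mulVec, dotProduct]
      simp only [Dmat, Matrix.of_apply, ite_mul, zero_mul]
      rw [Finset.sum_ite_eq]
      simp
    -- C part
    have hC : (CpmBlock m (2*l)).mulVec (fun p => w p.1.val) (a, k)
        = 2 * ∑ b ∈ Finset.range (2*l - a.val), w b := by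
      rw [Matrix.mulVec, dotProduct, Fintype.sum_prod_type]
      have inner : ∀ b : Fin (2*l),
          ∑ k' : Fin m, CpmBlock m (2*l) (a,k) (b,k') * w (b,k').1.val
          = if b.val < 2*l - a.val then 2 * w b.val else 0 := by
        intro b
        simp only [CpmBlock, Matrix.of_apply]
        by_cases h : a.val + b.val + 1 ≤ 2*l
        · rw [if_pos (by omega)]
          simp only [if_pos h]
          rw [← Finset.sum_mul, Finset.sum_add_distrib, sum1 m hm k, sum2 m hm k]
          norm_num
        · rw [if_neg (by omega)]
          simp only [if_neg h]
          simp
      rw [Finset.sum_congr rfl (fun b _ => inner b)]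
      rw [Fin.sum_univ_eq_sum_range (fun b => if b < 2*l - a.val then 2 * w b else 0) (2*l)]
      rw [sum_ite_lt (fun b => 2 * w b) (2*l - a.val) (2*l) (by omega), Finset.mul_sum]
    rw [hD, hC, Tform l i hi1 hi2]
    have hcast : ((2*l - a.val : ℕ):ℂ) = 2*(l:ℂ) - a.val := by
      rw [Nat.cast_sub (by omega)]; push_cast; ring
    rw [hcast]
    simp only [hw]
    split_ifs <;>
      first
        | ring1
        | (exfalso; omega)
        | (rw [show (a.val : ℂ) = (l:ℂ) - i from by
              rw [show a.val = l - i from by omega, Nat.cast_sub hi2]]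
           ring1)
  · intro h
    have h0 : (0:ℕ) < m := by omega
    have hl : l - i < 2*l := by omega
    have hthis := congrFun h (⟨l - i, hl⟩, ⟨0, h0⟩)
    simp only [hw, Pi.zero_apply] at hthis
    rw [if_pos trivial, if_neg (lt_irrefl _)] at hthis
    have h2 : ((2*i : ℕ) : ℂ) = ((1:ℕ) : ℂ) := by push_cast; linear_combination -hthis
    have h3 := Nat.cast_injective h2
    omega
end

section
/- For m > 2 and n > 1, every even integer in the set [0, 2n] \ {2⌊n/2⌋} is an eigenvalue of the matrix M^±(m,n) = C^±(m,n) + D(m,n). -/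
lemma sum_ind1 (m : ℕ) (hm : 2 < m) (c : Fin m) :
    (∑ d : Fin m, (if ((d:ℕ) + m - (c:ℕ)) % m = 1 % m then (1:ℂ) else 0)) = 1 := by
  have hm0 : 0 < m := by omega
  set d0 : Fin m := ⟨((c:ℕ)+1) % m, Nat.mod_lt _ hm0⟩ with hd0
  have key : ∀ d : Fin m, (((d:ℕ) + m - (c:ℕ)) % m = 1 % m) ↔ d = d0 := by
    intro d
    have hc := c.isLt; have hd := d.isLt
    have h1 : 1 % m = 1 := Nat.mod_eq_of_lt (by omega)
    have e1 : ((d:ℕ) + m - (c:ℕ)) % m =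
        if (d:ℕ) + m - (c:ℕ) < m then (d:ℕ)+m-(c:ℕ) else (d:ℕ)+m-(c:ℕ)-m := by
      split_ifs with h
      · exact Nat.mod_eq_of_lt h
      · rw [Nat.mod_eq_sub_mod (by omega)]; exact Nat.mod_eq_of_lt (by omega)
    have e2 : ((c:ℕ)+1) % m = if (c:ℕ)+1 < m then (c:ℕ)+1 else 0 := by
      split_ifs with h
      · exact Nat.mod_eq_of_lt h
      · have hcm : (c:ℕ)+1 = m := by omega
        simp [hcm]
    rw [Fin.ext_iff]
    show _ ↔ (d:ℕ) = ((c:ℕ)+1) % m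
    rw [e1, e2, h1]
    split_ifs <;> omega
  simp only [key]
  simp

lemma sum_ind2 (m : ℕ) (hm : 2 < m) (c : Fin m) :
    (∑ d : Fin m, (if ((c:ℕ) + m - (d:ℕ)) % m = 1 % m then (1:ℂ) else 0)) = 1 := by
  have hm0 : 0 < m := by omega
  set d0 : Fin m := ⟨((c:ℕ)+m-1) % m, Nat.mod_lt _ hm0⟩ with hd0
  have key : ∀ d : Fin m, (((c:ℕ) + m - (d:ℕ)) % m = 1 % m) ↔ d = d0 := by
    intro d
    have hc := c.isLt; have hd := d.isLt
    have h1 : 1 % m = 1 := Nat.mod_eq_of_lt (by omega)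
    have e1 : ((c:ℕ) + m - (d:ℕ)) % m =
        if (c:ℕ) + m - (d:ℕ) < m then (c:ℕ)+m-(d:ℕ) else (c:ℕ)+m-(d:ℕ)-m := by
      split_ifs with h
      · exact Nat.mod_eq_of_lt h
      · rw [Nat.mod_eq_sub_mod (by omega)]; exact Nat.mod_eq_of_lt (by omega)
    have e2 : ((c:ℕ)+m-1) % m = if (c:ℕ)+m-1 < m then (c:ℕ)+m-1 else (c:ℕ)+m-1-m := by
      split_ifs with h
      · exact Nat.mod_eq_of_lt h
      · rw [Nat.mod_eq_sub_mod (by omega)]; exact Nat.mod_eq_of_lt (by omega)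
    rw [Fin.ext_iff]
    show _ ↔ (d:ℕ) = ((c:ℕ)+m-1) % m
    rw [e1, e2, h1]
    split_ifs <;> omega
  simp only [key]
  simp

lemma mulVec_eq (m n : ℕ) (hm : 2 < m) (k : ℕ) (w : ℕ → ℂ)
    (hw : ∀ a : Fin n, (∑ b ∈ Finset.range (n - a.val), w b) = ((k:ℂ) - a.val) * w a.val) :
    (CpmBlock m n + Dmat m n).mulVec (fun p => w p.1.val)
      = ((2*k:ℕ):ℂ) • (fun p => w p.1.val) := by
  funext p
  obtain ⟨a, c⟩ := p
  simp only [Matrix.mulVec, dotProduct, Matrix.add_apply, CpmBlock, Dmat,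
    Matrix.of_apply, Pi.smul_apply, smul_eq_mul, add_mul]
  rw [Finset.sum_add_distrib]
  have hD : (∑ x : Fin n × Fin m,
      (if (a, c) = x then (2 * ((a, c).1.val : ℂ)) else 0) * w x.1.val)
      = 2 * (a.val : ℂ) * w a.val := by
    simp only [ite_mul, zero_mul]
    rw [Finset.sum_ite_eq]
    simp
  rw [hD]
  have hC : (∑ x : Fin n × Fin m,
      (if (a, c).1.val + x.1.val + 1 ≤ n then
        (if (x.2.val + m - (a, c).2.val) % m = 1 % m then (1 : ℂ) else 0) +
        (if ((a, c).2.val + m - x.2.val) % m = 1 % m then (1 : ℂ) else 0)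
      else 0) * w x.1.val)
      = 2 * (((k:ℂ) - a.val) * w a.val) := by
    rw [Fintype.sum_prod_type]
    have inner : ∀ b : Fin n, (∑ d : Fin m,
        (if (a, c).1.val + b.val + 1 ≤ n then
          (if ((d:ℕ) + m - (c:ℕ)) % m = 1 % m then (1 : ℂ) else 0) +
          (if ((c:ℕ) + m - (d:ℕ)) % m = 1 % m then (1 : ℂ) else 0)
        else 0) * w b.val)
        = (if a.val + b.val + 1 ≤ n then 2 * w b.val else 0) := by
      intro b
      rcases em (a.val + b.val + 1 ≤ n) with h | h
      · simp only [if_pos h]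
        rw [← Finset.sum_mul, Finset.sum_add_distrib, sum_ind1 m hm c, sum_ind2 m hm c]
        norm_num
      · simp only [if_neg h]
        simp
    simp only [inner]
    have conv1 : (∑ b : Fin n, (if a.val + b.val + 1 ≤ n then 2 * w b.val else 0))
        = ∑ b ∈ Finset.range (n - a.val), 2 * w b := by
      rw [Fin.sum_univ_eq_sum_range (fun b => if a.val + b + 1 ≤ n then 2 * w b else 0) n]
      rw [← Finset.sum_filter]
      apply Finset.sum_congr
      · ext x
        simp only [Finset.mem_filter, Finset.mem_range]
        have := a.isLt
        omega
      · intro x _; rfl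
    rw [conv1, ← Finset.mul_sum, hw a]
  rw [hC]
  push_cast
  ring

lemma caseA (n k : ℕ) (hk : 2*k + 2 ≤ n) :
    ∀ a : Fin n, (∑ b ∈ Finset.range (n - a.val),
      (fun b => if b < k then (0:ℂ) else if b = k then 2*(k:ℂ)+1-(n:ℂ)
        else if b + k + 1 ≤ n then 1 else 0) b)
      = ((k:ℂ) - a.val) * (if a.val < k then (0:ℂ) else if a.val = k then 2*(k:ℂ)+1-(n:ℂ)
        else if a.val + k + 1 ≤ n then 1 else 0) := by
  set w : ℕ → ℂ := fun b => if b < k then (0:ℂ) else if b = k then 2*(k:ℂ)+1-(n:ℂ)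
        else if b + k + 1 ≤ n then 1 else 0 with hwdef
  have hS : ∀ t : ℕ, (∑ b ∈ Finset.range t, w b)
      = if t ≤ k then 0 else if t ≤ n - k then (t:ℂ) + k - n else 0 := by
    intro t
    induction t with
    | zero => simp
    | succ t ih =>
      rw [Finset.sum_range_succ, ih, hwdef]
      simp only
      split_ifs <;> push_cast <;>
        first
          | ring1
          | (exfalso; omega)
          | (have ht : t = k := by omega
             subst ht; push_cast; ring1)
          | (have ht : t + k = n := by omega
             have ht' : (t:ℂ) + k = n := by exact_mod_cast congrArg (Nat.cast (R := ℂ)) ht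
             linear_combination ht')
  intro a
  have ha := a.isLt
  rw [hS (n - a.val)]
  have hcast : ((n - a.val : ℕ) : ℂ) = (n:ℂ) - a.val := by
    push_cast [Nat.cast_sub (le_of_lt ha)]; ring
  split_ifs <;>
    first
      | ring1
      | (exfalso; omega)
      | (rw [hcast]; ring1)
      | (have h' : (a.val : ℕ) = k := by omega
         have h'' : ((a.val:ℕ):ℂ) = k := by exact_mod_cast h'
         try rw [hcast]
         rw [h'']; ring1)

lemma caseB (n k : ℕ) (hk : n < 2*k) (hkn : k ≤ n) :
    ∀ a : Fin n, (∑ b ∈ Finset.range (n - a.val),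
      (fun b => if b < n - k then (0:ℂ) else if b < k then -1
        else if b = k then 2*(k:ℂ)-(n:ℂ) else 0) b)
      = ((k:ℂ) - a.val) * (if a.val < n - k then (0:ℂ) else if a.val < k then -1
        else if a.val = k then 2*(k:ℂ)-(n:ℂ) else 0) := by
  set w : ℕ → ℂ := fun b => if b < n - k then (0:ℂ) else if b < k then -1
        else if b = k then 2*(k:ℂ)-(n:ℂ) else 0 with hwdef
  have hS : ∀ t : ℕ, (∑ b ∈ Finset.range t, w b)
      = if t ≤ n - k then 0 else if t ≤ k then (n:ℂ) - k - t else 0 := by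
    intro t
    induction t with
    | zero => simp
    | succ t ih =>
      rw [Finset.sum_range_succ, ih, hwdef]
      simp only
      split_ifs <;> push_cast <;>
        first
          | ring1
          | (exfalso; omega)
          | (have ht : t + k = n := by omega
             have ht' : (t:ℂ) + k = n := by exact_mod_cast congrArg (Nat.cast (R := ℂ)) ht
             linear_combination ht')
          | (have ht : t = k := by omega
             subst ht; push_cast; ring1)
  intro a
  have ha := a.isLt
  rw [hS (n - a.val)]
  have hcast : ((n - a.val : ℕ) : ℂ) = (n:ℂ) - a.val := by
    push_cast [Nat.cast_sub (le_of_lt ha)]; ring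
  split_ifs <;>
    first
      | ring1
      | (exfalso; omega)
      | (rw [hcast]; ring1)
      | (have h' : (a.val : ℕ) = k := by omega
         have h'' : ((a.val:ℕ):ℂ) = k := by exact_mod_cast h'
         try rw [hcast]
         rw [h'']; ring1)

/-- For m > 2 and n > 1, every even integer 2k with 0 ≤ k ≤ n and k ≠ ⌊n/2⌋ is an
eigenvalue of M^±(m,n) = C^±(m,n) + D(m,n). -/
theorem stmt_15 (m n : ℕ) (hm : 2 < m) (hn : 1 < n) :
    ∀ k : ℕ, k ≤ n → k ≠ n / 2 →
      ∃ v : Fin n × Fin m → ℂ, v ≠ 0 ∧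
        (CpmBlock m n + Dmat m n).mulVec v = ((2 * k : ℕ) : ℂ) • v := by
  intro k hk hkn
  rcases lt_or_ge (2*k) n with h | h
  · -- case A: 2k < n, in fact 2k + 2 ≤ n since 2k ≠ n - 1 (else k = n/2)
    have hk2 : 2*k + 2 ≤ n := by omega
    set w : ℕ → ℂ := fun b => if b < k then (0:ℂ) else if b = k then 2*(k:ℂ)+1-(n:ℂ)
        else if b + k + 1 ≤ n then 1 else 0 with hwdef
    refine ⟨fun p => w p.1.val, ?_, mulVec_eq m n hm k w (caseA n k hk2)⟩
    intro h0
    have := congrFun h0 (⟨k, by omega⟩, ⟨0, by omega⟩)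
    simp only [hwdef, Pi.zero_apply, lt_self_iff_false, if_false, eq_self_iff_true, if_true] at this
    have h1 : ((2*k+1 : ℕ):ℂ) = ((n : ℕ):ℂ) := by push_cast; linear_combination this
    have h2 : 2*k+1 = n := Nat.cast_injective h1
    omega
  · -- case B: n ≤ 2k, in fact n < 2k since 2k ≠ n (else k = n/2)
    have hk2 : n < 2*k := by omega
    set w : ℕ → ℂ := fun b => if b < n - k then (0:ℂ) else if b < k then -1
        else if b = k then 2*(k:ℂ)-(n:ℂ) else 0 with hwdef
    refine ⟨fun p => w p.1.val, ?_, mulVec_eq m n hm k w (caseB n k hk2 hk)⟩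
    intro h0
    have := congrFun h0 (⟨n - k, by omega⟩, ⟨0, by omega⟩)
    simp only [hwdef, Pi.zero_apply, lt_self_iff_false, if_false] at this
    rw [if_pos (by omega : n - k < k)] at this
    exact (by norm_num : ((-1:ℂ)) ≠ 0) this
end
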